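/- Let η = (K1, K2, K3, K4, κ3, κ6, κ9, κ12) be a tuple of positive real parameters with a(η) > 0 and b(η) < 0. If −b(η) ≤ 4·K3^{−1}·(K1^2·K2·K3^3·K4^2·κ3·κ6^2·κ9^2·κ12·a(η))^{1/4} + 3·(K1^2·K4·κ6^2·κ9^2·a(η))^{1/3} + 2·(K2·K3·κ3·κ12·a(η))^{1/2} + 3·K2^{−1}·(K1·K2^2·K3·K4^2·κ3·κ6^2·κ9^2·κ12)^{1/3}, then p_{η,H}(x1,x3) ≥ 0 for all x1 > 0, x3 > 0. -/

import Mathlib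

private lemma amgm2' (u v : ℝ) (hu : 0 ≤ u) (hv : 0 ≤ v) :
    2 * (u * v) ^ ((1 : ℝ) / 2) ≤ u + v := by
  have h := Real.geom_mean_le_arith_mean2_weighted (by norm_num : (0:ℝ) ≤ 1/2)
    (by norm_num : (0:ℝ) ≤ 1/2) hu hv (by norm_num)
  rw [Real.mul_rpow hu hv]
  nlinarith [h]

private lemma amgm3' (u v w : ℝ) (hu : 0 ≤ u) (hv : 0 ≤ v) (hw : 0 ≤ w) :
    3 * (u * v * w) ^ ((1 : ℝ) / 3) ≤ u + v + w := by
  have h := Real.geom_mean_le_arith_mean3_weighted (by norm_num : (0:ℝ) ≤ 1/3)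
    (by norm_num : (0:ℝ) ≤ 1/3) (by norm_num : (0:ℝ) ≤ 1/3) hu hv hw (by norm_num)
  rw [Real.mul_rpow (mul_nonneg hu hv) hw, Real.mul_rpow hu hv]
  nlinarith [h]

private lemma amgm4' (u v w z : ℝ) (hu : 0 ≤ u) (hv : 0 ≤ v) (hw : 0 ≤ w) (hz : 0 ≤ z) :
    4 * (u * v * w * z) ^ ((1 : ℝ) / 4) ≤ u + v + w + z := by
  have h := Real.geom_mean_le_arith_mean4_weighted (by norm_num : (0:ℝ) ≤ 1/4)
    (by norm_num : (0:ℝ) ≤ 1/4) (by norm_num : (0:ℝ) ≤ 1/4) (by norm_num : (0:ℝ) ≤ 1/4)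
    hu hv hw hz (by norm_num)
  rw [Real.mul_rpow (mul_nonneg (mul_nonneg hu hv) hw) hz,
    Real.mul_rpow (mul_nonneg hu hv) hw, Real.mul_rpow hu hv]
  nlinarith [h]

private lemma pow2_rpow (t : ℝ) (ht : 0 ≤ t) : (t ^ 2) ^ ((1:ℝ)/2) = t := by
  rw [show (1:ℝ)/2 = ((2:ℕ):ℝ)⁻¹ by norm_num, Real.pow_rpow_inv_natCast ht (by norm_num)]

private lemma pow3_rpow (t : ℝ) (ht : 0 ≤ t) : (t ^ 3) ^ ((1:ℝ)/3) = t := by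
  rw [show (1:ℝ)/3 = ((3:ℕ):ℝ)⁻¹ by norm_num, Real.pow_rpow_inv_natCast ht (by norm_num)]

private lemma pow4_rpow (t : ℝ) (ht : 0 ≤ t) : (t ^ 4) ^ ((1:ℝ)/4) = t := by
  rw [show (1:ℝ)/4 = ((4:ℕ):ℝ)⁻¹ by norm_num, Real.pow_rpow_inv_natCast ht (by norm_num)]

private lemma amgm2_cover (u v G : ℝ) (hu : 0 ≤ u) (hv : 0 ≤ v) (hG : 0 ≤ G)
    (h : u * v = G ^ 2) : 2 * G ≤ u + v := by
  have h' := amgm2' u v hu hv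
  rwa [h, pow2_rpow G hG] at h'

private lemma amgm3_cover (u v w G : ℝ) (hu : 0 ≤ u) (hv : 0 ≤ v) (hw : 0 ≤ w) (hG : 0 ≤ G)
    (h : u * v * w = G ^ 3) : 3 * G ≤ u + v + w := by
  have h' := amgm3' u v w hu hv hw
  rwa [h, pow3_rpow G hG] at h'

private lemma amgm4_cover (u v w z G : ℝ) (hu : 0 ≤ u) (hv : 0 ≤ v) (hw : 0 ≤ w) (hz : 0 ≤ z)
    (hG : 0 ≤ G) (h : u * v * w * z = G ^ 4) : 4 * G ≤ u + v + w + z := by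
  have h' := amgm4' u v w z hu hv hw hz
  rwa [h, pow4_rpow G hG] at h'

/-- The bivariate polynomial `p_{η,H}` supported on the hexagonal face `H`. -/
def pEtaH (K1 K2 K3 K4 κ3 κ6 κ9 κ12 x1 x3 : ℝ) : ℝ :=
  K2 * κ3 * (κ3 * κ12 - κ6 * κ9) *
      (K2 * K4 * κ3 * κ9 * x1 ^ 4 * x3 ^ 2 + K1 * K3 * κ6 * κ12 * x1 ^ 2 * x3 ^ 2
        + K2 * K3 * κ3 * κ12 * x1 ^ 3 * x3 ^ 2)
    + K1 * K2 * K3 * κ3 * κ6 * κ12 * ((K2 + K3) * κ3 * κ12 - (K1 + K4) * κ6 * κ9)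
        * x1 ^ 2 * x3
    + K1 * κ6 *
        (K2 ^ 2 * K4 * κ3 ^ 2 * κ9 ^ 2 * x1 ^ 4 * x3
          + 2 * K2 * K3 * K4 * κ3 ^ 2 * κ9 * κ12 * x1 ^ 3 * x3
          + K1 * K2 * K3 * K4 * κ3 * κ6 * κ9 * κ12 * x1 ^ 2
          + 2 * K1 * K2 * K3 * κ3 * κ6 * κ12 ^ 2 * x1 * x3
          + K1 * K2 * K3 ^ 2 * κ3 * κ6 * κ12 ^ 2 * x1
          + K1 * K3 ^ 2 * κ6 ^ 2 * κ12 ^ 2 * x3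
          + K1 ^ 2 * K3 ^ 2 * κ6 ^ 2 * κ12 ^ 2)

/-- Sufficient condition for nonnegativity of `p_{η,H}` on the positive
orthant coming from the pure cover. -/
theorem pEtaH_nonneg_of_cover12
    (K1 K2 K3 K4 κ3 κ6 κ9 κ12 : ℝ)
    (hK1 : 0 < K1) (hK2 : 0 < K2) (hK3 : 0 < K3) (hK4 : 0 < K4)
    (hκ3 : 0 < κ3) (hκ6 : 0 < κ6) (hκ9 : 0 < κ9) (hκ12 : 0 < κ12)
    (ha : 0 < κ3 * κ12 - κ6 * κ9)
    (hb : (K2 + K3) * κ3 * κ12 - (K1 + K4) * κ6 * κ9 < 0)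
    (hcond : -((K2 + K3) * κ3 * κ12 - (K1 + K4) * κ6 * κ9) ≤
      4 * K3⁻¹ * (K1 ^ 2 * K2 * K3 ^ 3 * K4 ^ 2 * κ3 * κ6 ^ 2 * κ9 ^ 2 * κ12
            * (κ3 * κ12 - κ6 * κ9)) ^ ((1 : ℝ) / 4)
        + 3 * (K1 ^ 2 * K4 * κ6 ^ 2 * κ9 ^ 2 * (κ3 * κ12 - κ6 * κ9)) ^ ((1 : ℝ) / 3)
        + 2 * (K2 * K3 * κ3 * κ12 * (κ3 * κ12 - κ6 * κ9)) ^ ((1 : ℝ) / 2)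
        + 3 * K2⁻¹ * (K1 * K2 ^ 2 * K3 * K4 ^ 2 * κ3 * κ6 ^ 2 * κ9 ^ 2 * κ12) ^ ((1 : ℝ) / 3)) :
    ∀ x1 x3 : ℝ, 0 < x1 → 0 < x3 → 0 ≤ pEtaH K1 K2 K3 K4 κ3 κ6 κ9 κ12 x1 x3 := by
  intro x1 x3 hx1 hx3
  have ha' : (0:ℝ) ≤ κ3 * κ12 - κ6 * κ9 := ha.le
  set c : ℝ := K1 * K2 * K3 * κ3 * κ6 * κ12 with hc
  set X : ℝ := x1 ^ 2 * x3 with hX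
  have hcX : (0:ℝ) < c * X := by positivity
  -- the four geometric-mean roots appearing in `hcond`
  set r4 : ℝ := (K1 ^ 2 * K2 * K3 ^ 3 * K4 ^ 2 * κ3 * κ6 ^ 2 * κ9 ^ 2 * κ12
      * (κ3 * κ12 - κ6 * κ9)) ^ ((1 : ℝ) / 4) with hr4def
  set r3a : ℝ := (K1 ^ 2 * K4 * κ6 ^ 2 * κ9 ^ 2 * (κ3 * κ12 - κ6 * κ9)) ^ ((1 : ℝ) / 3)
    with hr3adef
  set r2 : ℝ := (K2 * K3 * κ3 * κ12 * (κ3 * κ12 - κ6 * κ9)) ^ ((1 : ℝ) / 2) with hr2def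
  set r3b : ℝ := (K1 * K2 ^ 2 * K3 * K4 ^ 2 * κ3 * κ6 ^ 2 * κ9 ^ 2 * κ12) ^ ((1 : ℝ) / 3)
    with hr3bdef
  have hr4 : r4 ^ 4 = K1 ^ 2 * K2 * K3 ^ 3 * K4 ^ 2 * κ3 * κ6 ^ 2 * κ9 ^ 2 * κ12
      * (κ3 * κ12 - κ6 * κ9) := by
    rw [hr4def, show (1:ℝ)/4 = ((4:ℕ):ℝ)⁻¹ by norm_num,
      Real.rpow_inv_natCast_pow (by positivity) (by norm_num)]
  have hr3a : r3a ^ 3 = K1 ^ 2 * K4 * κ6 ^ 2 * κ9 ^ 2 * (κ3 * κ12 - κ6 * κ9) := by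
    rw [hr3adef, show (1:ℝ)/3 = ((3:ℕ):ℝ)⁻¹ by norm_num,
      Real.rpow_inv_natCast_pow (by positivity) (by norm_num)]
  have hr2 : r2 ^ 2 = K2 * K3 * κ3 * κ12 * (κ3 * κ12 - κ6 * κ9) := by
    rw [hr2def, show (1:ℝ)/2 = ((2:ℕ):ℝ)⁻¹ by norm_num,
      Real.rpow_inv_natCast_pow (by positivity) (by norm_num)]
  have hr3b : r3b ^ 3 = K1 * K2 ^ 2 * K3 * K4 ^ 2 * κ3 * κ6 ^ 2 * κ9 ^ 2 * κ12 := by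
    rw [hr3bdef, show (1:ℝ)/3 = ((3:ℕ):ℝ)⁻¹ by norm_num,
      Real.rpow_inv_natCast_pow (by positivity) (by norm_num)]
  have hr4n : 0 ≤ r4 := by rw [hr4def]; positivity
  have hr3an : 0 ≤ r3a := by rw [hr3adef]; positivity
  have hr2n : 0 ≤ r2 := by rw [hr2def]; positivity
  have hr3bn : 0 ≤ r3b := by rw [hr3bdef]; positivity
  -- the ten positive monomials of p
  set u1 : ℝ := K2 * κ3 * (κ3 * κ12 - κ6 * κ9) * (K2 * K4 * κ3 * κ9) * (x1 ^ 4 * x3 ^ 2) with hu1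
  set v1 : ℝ := K1 * κ6 * (K1 * K2 * K3 * K4 * κ3 * κ6 * κ9 * κ12) * x1 ^ 2 with hv1
  set w1 : ℝ := K1 * κ6 * (K1 * K2 * K3 * κ3 * κ6 * κ12 ^ 2) * (x1 * x3) with hw1
  set u2 : ℝ := K2 * κ3 * (κ3 * κ12 - κ6 * κ9) * (K1 * K3 * κ6 * κ12) * (x1 ^ 2 * x3 ^ 2) with hu2
  set v2 : ℝ := K1 * κ6 * (K2 ^ 2 * K4 * κ3 ^ 2 * κ9 ^ 2) * (x1 ^ 4 * x3) with hv2
  set w2 : ℝ := K1 * κ6 * (K1 ^ 2 * K3 ^ 2 * κ6 ^ 2 * κ12 ^ 2) with hw2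
  set u3 : ℝ := K2 * κ3 * (κ3 * κ12 - κ6 * κ9) * (K2 * K3 * κ3 * κ12) * (x1 ^ 3 * x3 ^ 2) with hu3
  set v3 : ℝ := K1 * κ6 * (K1 * K2 * K3 ^ 2 * κ3 * κ6 * κ12 ^ 2) * x1 with hv3
  set u4 : ℝ := K1 * κ6 * (K2 * K3 * K4 * κ3 ^ 2 * κ9 * κ12) * (x1 ^ 3 * x3) with hu4
  set w4 : ℝ := K1 * κ6 * (K1 * K3 ^ 2 * κ6 ^ 2 * κ12 ^ 2) * x3 with hw4
  have h4 : 4 * (K3⁻¹ * r4 * (c * X)) ≤ u1 + v1 + w1 + w1 := by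
    refine amgm4_cover u1 v1 w1 w1 _ (by rw [hu1]; positivity) (by rw [hv1]; positivity)
      (by rw [hw1]; positivity) (by rw [hw1]; positivity) (by positivity) ?_
    rw [show (K3⁻¹ * r4 * (c * X)) ^ 4 = (K3⁻¹) ^ 4 * r4 ^ 4 * (c * X) ^ 4 by ring, hr4,
      hu1, hv1, hw1, hc, hX]
    field_simp
  have h3a : 3 * (r3a * (c * X)) ≤ u2 + v2 + w2 := by
    refine amgm3_cover u2 v2 w2 _ (by rw [hu2]; positivity) (by rw [hv2]; positivity)
      (by rw [hw2]; positivity) (by positivity) ?_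
    rw [show (r3a * (c * X)) ^ 3 = r3a ^ 3 * (c * X) ^ 3 by ring, hr3a, hu2, hv2, hw2, hc, hX]
    ring
  have h2 : 2 * (r2 * (c * X)) ≤ u3 + v3 := by
    refine amgm2_cover u3 v3 _ (by rw [hu3]; positivity) (by rw [hv3]; positivity)
      (by positivity) ?_
    rw [show (r2 * (c * X)) ^ 2 = r2 ^ 2 * (c * X) ^ 2 by ring, hr2, hu3, hv3, hc, hX]
    ring
  have h3b : 3 * (K2⁻¹ * r3b * (c * X)) ≤ u4 + u4 + w4 := by
    refine amgm3_cover u4 u4 w4 _ (by rw [hu4]; positivity) (by rw [hu4]; positivity)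
      (by rw [hw4]; positivity) (by positivity) ?_
    rw [show (K2⁻¹ * r3b * (c * X)) ^ 3 = (K2⁻¹) ^ 3 * r3b ^ 3 * (c * X) ^ 3 by ring, hr3b,
      hu4, hw4, hc, hX]
    field_simp
  have hsum : pEtaH K1 K2 K3 K4 κ3 κ6 κ9 κ12 x1 x3
      = c * ((K2 + K3) * κ3 * κ12 - (K1 + K4) * κ6 * κ9) * X
        + ((u1 + v1 + w1 + w1) + (u2 + v2 + w2) + (u3 + v3) + (u4 + u4 + w4)) := by
    rw [pEtaH, hc, hX, hu1, hv1, hw1, hu2, hv2, hw2, hu3, hv3, hu4, hw4]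
    ring
  have key : (-((K2 + K3) * κ3 * κ12 - (K1 + K4) * κ6 * κ9)) * (c * X)
      ≤ (u1 + v1 + w1 + w1) + (u2 + v2 + w2) + (u3 + v3) + (u4 + u4 + w4) := by
    have h0 : (-((K2 + K3) * κ3 * κ12 - (K1 + K4) * κ6 * κ9)) * (c * X)
        ≤ (4 * K3⁻¹ * r4 + 3 * r3a + 2 * r2 + 3 * K2⁻¹ * r3b) * (c * X) :=
      mul_le_mul_of_nonneg_right hcond hcX.le
    have hexp : (4 * K3⁻¹ * r4 + 3 * r3a + 2 * r2 + 3 * K2⁻¹ * r3b) * (c * X)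
        = 4 * (K3⁻¹ * r4 * (c * X)) + 3 * (r3a * (c * X)) + 2 * (r2 * (c * X))
          + 3 * (K2⁻¹ * r3b * (c * X)) := by ring
    rw [hexp] at h0
    linarith [h4, h3a, h2, h3b]
  rw [hsum]
  have hfin : c * ((K2 + K3) * κ3 * κ12 - (K1 + K4) * κ6 * κ9) * X
      = -((-((K2 + K3) * κ3 * κ12 - (K1 + K4) * κ6 * κ9)) * (c * X)) := by ring
  linarith [key, hfin.le, hfin.ge]
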